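/- For every real β > −1, every integer k ≥ 2, and every ζ ∈ ℝ: ((2k+β)/(k+β)) J_k^{−1,β}(ζ) = ((k+β+1)/(2k+β+1)) J_k^{0,β+1}(ζ) − ((1+β)(2k+β)/((2k+β−1)(2k+β+1))) J_{k−1}^{0,β+1}(ζ) − ((k−1)/(2k+β−1)) J_{k−2}^{0,β+1}(ζ). -/

import Mathlib

open Real MeasureTheory

/-- Generalized binomial coefficient `C(x,k) = x(x-1)⋯(x-k+1)/k!`. -/
noncomputable def genBinom (x : ℝ) (k : ℕ) : ℝ :=
  (descPochhammer ℝ k).eval x / (Nat.factorial k : ℝ)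

/-- Generalized Jacobi polynomial `J_n^{α,β}(ζ)`. -/
noncomputable def genJacobi (α β : ℝ) (n : ℕ) (ζ : ℝ) : ℝ :=
  ∑ m ∈ Finset.range (n + 1),
    genBinom ((n : ℝ) + α) (n - m) * genBinom ((n : ℝ) + β) m *
      ((ζ - 1) / 2) ^ m * ((ζ + 1) / 2) ^ (n - m)


lemma genBinom_zero (x : ℝ) : genBinom x 0 = 1 := by
  simp [genBinom]

lemma genBinom_L2 (x : ℝ) (k : ℕ) :
    ((k : ℝ) + 1) * genBinom x (k + 1) = (x - k) * genBinom x k := by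
  have hf : (Nat.factorial k : ℝ) ≠ 0 := by positivity
  unfold genBinom
  rw [descPochhammer_succ_right]
  push_cast [Nat.factorial_succ]
  field_simp
  simp only [Polynomial.eval_sub, Polynomial.eval_mul, Polynomial.eval_X, Polynomial.eval_natCast]
  ring

lemma genBinom_L3 (x : ℝ) (k : ℕ) :
    ((k : ℝ) + 1) * genBinom x (k + 1) = x * genBinom (x - 1) k := by
  have hf : (Nat.factorial k : ℝ) ≠ 0 := by positivity
  unfold genBinom
  rw [descPochhammer_succ_left]
  push_cast [Nat.factorial_succ]
  simp [Polynomial.eval_comp]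
  field_simp

lemma genBinom_L2' (x : ℝ) (k : ℕ) :
    x * genBinom (x - 1) k = (x - k) * genBinom x k := by
  rw [← genBinom_L3, genBinom_L2]

lemma genBinom_L1 (x : ℝ) (k : ℕ) :
    genBinom (x + 1) (k + 1) = genBinom x (k + 1) + genBinom x k := by
  have h3 := genBinom_L3 (x + 1) k
  have h2 := genBinom_L2 x k
  have hk : ((k : ℝ) + 1) ≠ 0 := by positivity
  have h : ((k : ℝ) + 1) * genBinom (x+1) (k+1) = ((k:ℝ)+1) * (genBinom x (k+1) + genBinom x k) := by
    rw [h3]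
    have hx : x + 1 - 1 = x := by ring
    rw [hx, mul_add, h2]
    ring
  exact mul_left_cancel₀ hk h

lemma peel (N : ℕ) (F : ℕ → ℝ) :
    ∑ m ∈ Finset.range (N+1+1), F m
      = F 0 + (∑ i ∈ Finset.range N, F (i+1)) + F (N+1) := by
  rw [Finset.sum_range_succ' F (N+1), Finset.sum_range_succ]
  ring

lemma lemB (α β : ℝ) (N : ℕ) (ζ : ℝ) :
    (2*((N:ℝ)+1)+α+β+1) * genJacobi α β (N+1) ζ
      = (((N:ℝ)+1)+α+β+1) * genJacobi α (β+1) (N+1) ζ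
        + (((N:ℝ)+1)+α) * genJacobi α (β+1) N ζ := by
  have hy : ((ζ+1)/2 : ℝ) = (ζ-1)/2 + 1 := by ring
  set x : ℝ := (ζ-1)/2 with hxdef
  set y : ℝ := (ζ+1)/2 with hydef
  have hsplit : genJacobi α (β+1) N ζ
      = (∑ m ∈ Finset.range (N+1+1),
          (genBinom ((N:ℝ)+α) (N-m) * genBinom ((N:ℝ)+(β+1)) m * x^m * y^(N+1-m)
           - genBinom ((N:ℝ)+α) (N+1-m) * genBinom ((N:ℝ)+(β+1)) (m-1) * x^m * y^(N+1-m)))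
        - genBinom ((N:ℝ)+(β+1)) (N+1) * x^(N+1)
        + genBinom ((N:ℝ)+α) (N+1) * y^(N+1) := by
    rw [Finset.sum_sub_distrib]
    rw [Finset.sum_range_succ (fun m => genBinom ((N:ℝ)+α) (N-m) * genBinom ((N:ℝ)+(β+1)) m * x^m * y^(N+1-m))]
    rw [Finset.sum_range_succ' (fun m => genBinom ((N:ℝ)+α) (N+1-m) * genBinom ((N:ℝ)+(β+1)) (m-1) * x^m * y^(N+1-m))]
    have e1 : N - (N+1) = 0 := by omega
    have e2 : N + 1 - (N+1) = 0 := by omega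
    have hJ : genJacobi α (β+1) N ζ
        = ∑ m ∈ Finset.range (N+1),
            (genBinom ((N:ℝ)+α) (N-m) * genBinom ((N:ℝ)+(β+1)) m * x^m * y^(N+1-m)
             - genBinom ((N:ℝ)+α) (N+1-(m+1)) * genBinom ((N:ℝ)+(β+1)) ((m+1)-1) * x^(m+1) * y^(N+1-(m+1))) := by
      unfold genJacobi
      rw [Finset.sum_sub_distrib]
      have h2 : ∀ m ∈ Finset.range (N+1),
          genBinom ((N:ℝ)+α) (N-m) * genBinom ((N:ℝ)+(β+1)) m * x^m * y^(N-m)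
          = genBinom ((N:ℝ)+α) (N-m) * genBinom ((N:ℝ)+(β+1)) m * x^m * y^(N+1-m)
            - genBinom ((N:ℝ)+α) (N+1-(m+1)) * genBinom ((N:ℝ)+(β+1)) ((m+1)-1) * x^(m+1) * y^(N+1-(m+1)) := by
        intro m hm
        rw [Finset.mem_range] at hm
        have e3 : N + 1 - (m+1) = N - m := by omega
        have e4 : (m+1) - 1 = m := by omega
        have e5 : N + 1 - m = (N - m) + 1 := by omega
        rw [e3, e4, e5, pow_succ, hy]
        ring
      rw [← Finset.sum_sub_distrib]
      exact Finset.sum_congr rfl h2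
    rw [hJ, Finset.sum_sub_distrib]
    simp only [e1, e2, Nat.zero_sub, genBinom_zero, pow_zero, Nat.sub_zero, Nat.add_sub_cancel]
    ring
  rw [hsplit]
  unfold genJacobi
  rw [Finset.mul_sum, Finset.mul_sum]
  have main : ∑ m ∈ Finset.range (N+1+1),
        (2*((N:ℝ)+1)+α+β+1) * (genBinom (((N+1:ℕ):ℝ)+α) (N+1-m) * genBinom (((N+1:ℕ):ℝ)+β) m * x^m * y^(N+1-m))
      = ∑ m ∈ Finset.range (N+1+1),
          ((((N:ℝ)+1)+α+β+1) * (genBinom (((N+1:ℕ):ℝ)+α) (N+1-m) * genBinom (((N+1:ℕ):ℝ)+(β+1)) m * x^m * y^(N+1-m))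
           + (((N:ℝ)+1)+α) * (genBinom ((N:ℝ)+α) (N-m) * genBinom ((N:ℝ)+(β+1)) m * x^m * y^(N+1-m)
              - genBinom ((N:ℝ)+α) (N+1-m) * genBinom ((N:ℝ)+(β+1)) (m-1) * x^m * y^(N+1-m)))
        + (((N:ℝ)+1)+α) * (genBinom ((N:ℝ)+α) (N+1) * y^(N+1) - genBinom ((N:ℝ)+(β+1)) (N+1) * x^(N+1)) := by
    have e1 : N - (N + 1) = 0 := by omega
    simp only [peel, e1, Nat.sub_zero, Nat.sub_self, Nat.zero_sub, Nat.add_sub_cancel,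
      Nat.succ_sub_succ, pow_zero, genBinom_zero]
    push_cast
    have h0 : (2 * ((N:ℝ) + 1) + α + β + 1) * (genBinom (↑N + 1 + α) (N + 1) * 1 * 1 * y ^ (N + 1))
        = (↑N + 1 + α + β + 1) * (genBinom (↑N + 1 + α) (N + 1) * 1 * 1 * y ^ (N + 1))
          + (↑N + 1 + α) * (genBinom (↑N + α) N * 1 * 1 * y ^ (N + 1)
              - genBinom (↑N + α) (N + 1) * 1 * 1 * y ^ (N + 1))
          + (↑N + 1 + α) * (genBinom (↑N + α) (N + 1) * y ^ (N + 1)) := by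
      have hA0 := genBinom_L3 ((N:ℝ) + 1 + α) N
      rw [show ((N:ℝ) + 1 + α - 1) = (N:ℝ) + α by ring] at hA0
      linear_combination y ^ (N + 1) * hA0
    have hn : (2 * ((N:ℝ) + 1) + α + β + 1) * (1 * genBinom (↑N + 1 + β) (N + 1) * x ^ (N + 1) * 1)
        = (↑N + 1 + α + β + 1) * (1 * genBinom (↑N + 1 + (β + 1)) (N + 1) * x ^ (N + 1) * 1)
          + (↑N + 1 + α) * (1 * genBinom (↑N + (β + 1)) (N + 1) * x ^ (N + 1) * 1
              - 1 * genBinom (↑N + (β + 1)) N * x ^ (N + 1) * 1)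
          - (↑N + 1 + α) * (genBinom (↑N + (β + 1)) (N + 1) * x ^ (N + 1)) := by
      rw [show ((N:ℝ) + 1 + (β + 1)) = ((N:ℝ) + 1 + β) + 1 by ring,
          show ((N:ℝ) + (β + 1)) = (N:ℝ) + 1 + β by ring]
      have hP := genBinom_L1 ((N:ℝ) + 1 + β) N
      have hB := genBinom_L2 ((N:ℝ) + 1 + β) N
      linear_combination (-(x ^ (N + 1)) * ((N:ℝ) + 1 + α + β + 1)) * hP + x ^ (N + 1) * hB
    have hint : ∑ i ∈ Finset.range N,
          (2 * ((N:ℝ) + 1) + α + β + 1) *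
            (genBinom (↑N + 1 + α) (N - i) * genBinom (↑N + 1 + β) (i + 1) * x ^ (i + 1) * y ^ (N - i))
        = ∑ i ∈ Finset.range N,
            ((↑N + 1 + α + β + 1) *
              (genBinom (↑N + 1 + α) (N - i) * genBinom (↑N + 1 + (β + 1)) (i + 1) * x ^ (i + 1) * y ^ (N - i))
             + (↑N + 1 + α) *
              (genBinom (↑N + α) (N - (i + 1)) * genBinom (↑N + (β + 1)) (i + 1) * x ^ (i + 1) * y ^ (N - i)
               - genBinom (↑N + α) (N - i) * genBinom (↑N + (β + 1)) i * x ^ (i + 1) * y ^ (N - i))) := by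
      refine Finset.sum_congr rfl ?_
      intro i hi
      rw [Finset.mem_range] at hi
      obtain ⟨p, rfl⟩ : ∃ p, N = i + 1 + p := ⟨N - (i + 1), by omega⟩
      have n1 : i + 1 + p - i = p + 1 := by omega
      have n2 : i + 1 + p - (i + 1) = p := by omega
      rw [n1, n2]
      push_cast
      rw [show ((i:ℝ) + 1 + ↑p + 1 + (β + 1)) = ((i:ℝ) + 1 + ↑p + 1 + β) + 1 by ring,
          show ((i:ℝ) + 1 + ↑p + (β + 1)) = (i:ℝ) + 1 + ↑p + 1 + β by ring]
      have hA := genBinom_L3 ((i:ℝ) + 1 + ↑p + 1 + α) p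
      rw [show ((i:ℝ) + 1 + ↑p + 1 + α - 1) = (i:ℝ) + 1 + ↑p + α by ring] at hA
      have hA' := genBinom_L2' ((i:ℝ) + 1 + ↑p + 1 + α) (p + 1)
      rw [show ((i:ℝ) + 1 + ↑p + 1 + α - 1) = (i:ℝ) + 1 + ↑p + α by ring] at hA'
      push_cast at hA'
      have hP := genBinom_L1 ((i:ℝ) + 1 + ↑p + 1 + β) i
      have hB := genBinom_L2 ((i:ℝ) + 1 + ↑p + 1 + β) i
      linear_combination
        (x ^ (i + 1) * y ^ (p + 1) * genBinom ((i:ℝ) + 1 + ↑p + 1 + β) (i + 1)) * hA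
        + (x ^ (i + 1) * y ^ (p + 1) * genBinom ((i:ℝ) + 1 + ↑p + 1 + β) i) * hA'
        - (x ^ (i + 1) * y ^ (p + 1) * ((i:ℝ) + 1 + ↑p + 1 + α + β + 1) *
            genBinom ((i:ℝ) + 1 + ↑p + 1 + α) (p + 1)) * hP
        + (x ^ (i + 1) * y ^ (p + 1) * genBinom ((i:ℝ) + 1 + ↑p + 1 + α) (p + 1)) * hB
    linarith [h0, hn, hint]
  rw [main, Finset.sum_add_distrib, ← Finset.mul_sum, ← Finset.mul_sum]
  ring

lemma lemA (α β : ℝ) (N : ℕ) (ζ : ℝ) :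
    (2*((N:ℝ)+1)+α+β) * genJacobi (α-1) β (N+1) ζ
      = (((N:ℝ)+1)+α+β) * genJacobi α β (N+1) ζ
        - (((N:ℝ)+1)+β) * genJacobi α β N ζ := by
  have hy : ((ζ+1)/2 : ℝ) = (ζ-1)/2 + 1 := by ring
  set x : ℝ := (ζ-1)/2 with hxdef
  set y : ℝ := (ζ+1)/2 with hydef
  have hsplit : genJacobi α β N ζ
      = (∑ m ∈ Finset.range (N+1+1),
          (genBinom ((N:ℝ)+α) (N-m) * genBinom ((N:ℝ)+β) m * x^m * y^(N+1-m)
           - genBinom ((N:ℝ)+α) (N+1-m) * genBinom ((N:ℝ)+β) (m-1) * x^m * y^(N+1-m)))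
        - genBinom ((N:ℝ)+β) (N+1) * x^(N+1)
        + genBinom ((N:ℝ)+α) (N+1) * y^(N+1) := by
    rw [Finset.sum_sub_distrib]
    rw [Finset.sum_range_succ (fun m => genBinom ((N:ℝ)+α) (N-m) * genBinom ((N:ℝ)+β) m * x^m * y^(N+1-m))]
    rw [Finset.sum_range_succ' (fun m => genBinom ((N:ℝ)+α) (N+1-m) * genBinom ((N:ℝ)+β) (m-1) * x^m * y^(N+1-m))]
    have e1 : N - (N+1) = 0 := by omega
    have e2 : N + 1 - (N+1) = 0 := by omega
    have hJ : genJacobi α β N ζ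
        = ∑ m ∈ Finset.range (N+1),
            (genBinom ((N:ℝ)+α) (N-m) * genBinom ((N:ℝ)+β) m * x^m * y^(N+1-m)
             - genBinom ((N:ℝ)+α) (N+1-(m+1)) * genBinom ((N:ℝ)+β) ((m+1)-1) * x^(m+1) * y^(N+1-(m+1))) := by
      unfold genJacobi
      rw [Finset.sum_sub_distrib]
      have h2 : ∀ m ∈ Finset.range (N+1),
          genBinom ((N:ℝ)+α) (N-m) * genBinom ((N:ℝ)+β) m * x^m * y^(N-m)
          = genBinom ((N:ℝ)+α) (N-m) * genBinom ((N:ℝ)+β) m * x^m * y^(N+1-m)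
            - genBinom ((N:ℝ)+α) (N+1-(m+1)) * genBinom ((N:ℝ)+β) ((m+1)-1) * x^(m+1) * y^(N+1-(m+1)) := by
        intro m hm
        rw [Finset.mem_range] at hm
        have e3 : N + 1 - (m+1) = N - m := by omega
        have e4 : (m+1) - 1 = m := by omega
        have e5 : N + 1 - m = (N - m) + 1 := by omega
        rw [e3, e4, e5, pow_succ, hy]
        ring
      rw [← Finset.sum_sub_distrib]
      exact Finset.sum_congr rfl h2
    rw [hJ, Finset.sum_sub_distrib]
    simp only [e1, e2, Nat.zero_sub, genBinom_zero, pow_zero, Nat.sub_zero, Nat.add_sub_cancel]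
    ring
  rw [hsplit]
  unfold genJacobi
  rw [Finset.mul_sum, Finset.mul_sum]
  have main : ∑ m ∈ Finset.range (N+1+1),
        (2*((N:ℝ)+1)+α+β) * (genBinom (((N+1:ℕ):ℝ)+(α-1)) (N+1-m) * genBinom (((N+1:ℕ):ℝ)+β) m * x^m * y^(N+1-m))
      = ∑ m ∈ Finset.range (N+1+1),
          ((((N:ℝ)+1)+α+β) * (genBinom (((N+1:ℕ):ℝ)+α) (N+1-m) * genBinom (((N+1:ℕ):ℝ)+β) m * x^m * y^(N+1-m))
           - (((N:ℝ)+1)+β) * (genBinom ((N:ℝ)+α) (N-m) * genBinom ((N:ℝ)+β) m * x^m * y^(N+1-m)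
              - genBinom ((N:ℝ)+α) (N+1-m) * genBinom ((N:ℝ)+β) (m-1) * x^m * y^(N+1-m)))
        - (((N:ℝ)+1)+β) * (genBinom ((N:ℝ)+α) (N+1) * y^(N+1) - genBinom ((N:ℝ)+β) (N+1) * x^(N+1)) := by
    have e1 : N - (N + 1) = 0 := by omega
    simp only [peel, e1, Nat.sub_zero, Nat.sub_self, Nat.zero_sub, Nat.add_sub_cancel,
      Nat.succ_sub_succ, pow_zero, genBinom_zero]
    push_cast
    have h0 : (2 * ((N:ℝ) + 1) + α + β) * (genBinom (↑N + 1 + (α - 1)) (N + 1) * 1 * 1 * y ^ (N + 1))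
        = (↑N + 1 + α + β) * (genBinom (↑N + 1 + α) (N + 1) * 1 * 1 * y ^ (N + 1))
          - (↑N + 1 + β) * (genBinom (↑N + α) N * 1 * 1 * y ^ (N + 1)
              - genBinom (↑N + α) (N + 1) * 1 * 1 * y ^ (N + 1))
          - (↑N + 1 + β) * (genBinom (↑N + α) (N + 1) * y ^ (N + 1)) := by
      rw [show ((N:ℝ) + 1 + (α - 1)) = (N:ℝ) + α by ring,
          show ((N:ℝ) + 1 + α) = ((N:ℝ) + α) + 1 by ring]
      have hPa0 := genBinom_L1 ((N:ℝ) + α) N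
      have hd0 := genBinom_L2 ((N:ℝ) + α) N
      linear_combination (-((N:ℝ) + 1 + α + β) * y ^ (N + 1)) * hPa0 + y ^ (N + 1) * hd0
    have hn : (2 * ((N:ℝ) + 1) + α + β) * (1 * genBinom (↑N + 1 + β) (N + 1) * x ^ (N + 1) * 1)
        = (↑N + 1 + α + β) * (1 * genBinom (↑N + 1 + β) (N + 1) * x ^ (N + 1) * 1)
          - (↑N + 1 + β) * (1 * genBinom (↑N + β) (N + 1) * x ^ (N + 1) * 1
              - 1 * genBinom (↑N + β) N * x ^ (N + 1) * 1)
          + (↑N + 1 + β) * (genBinom (↑N + β) (N + 1) * x ^ (N + 1)) := by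
      have hc0 := genBinom_L3 ((N:ℝ) + 1 + β) N
      rw [show ((N:ℝ) + 1 + β - 1) = (N:ℝ) + β by ring] at hc0
      linear_combination x ^ (N + 1) * hc0
    have hint : ∑ i ∈ Finset.range N,
          (2 * ((N:ℝ) + 1) + α + β) *
            (genBinom (↑N + 1 + (α - 1)) (N - i) * genBinom (↑N + 1 + β) (i + 1) * x ^ (i + 1) * y ^ (N - i))
        = ∑ i ∈ Finset.range N,
            ((↑N + 1 + α + β) *
              (genBinom (↑N + 1 + α) (N - i) * genBinom (↑N + 1 + β) (i + 1) * x ^ (i + 1) * y ^ (N - i))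
             - (↑N + 1 + β) *
              (genBinom (↑N + α) (N - (i + 1)) * genBinom (↑N + β) (i + 1) * x ^ (i + 1) * y ^ (N - i)
               - genBinom (↑N + α) (N - i) * genBinom (↑N + β) i * x ^ (i + 1) * y ^ (N - i))) := by
      refine Finset.sum_congr rfl ?_
      intro i hi
      rw [Finset.mem_range] at hi
      obtain ⟨p, rfl⟩ : ∃ p, N = i + 1 + p := ⟨N - (i + 1), by omega⟩
      have n1 : i + 1 + p - i = p + 1 := by omega
      have n2 : i + 1 + p - (i + 1) = p := by omega
      rw [n1, n2]
      push_cast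
      rw [show ((i:ℝ) + 1 + ↑p + 1 + (α - 1)) = (i:ℝ) + 1 + ↑p + α by ring,
          show ((i:ℝ) + 1 + ↑p + 1 + α) = ((i:ℝ) + 1 + ↑p + α) + 1 by ring]
      have hPa := genBinom_L1 ((i:ℝ) + 1 + ↑p + α) p
      have hB2 := genBinom_L2' ((i:ℝ) + 1 + ↑p + 1 + β) (i + 1)
      rw [show ((i:ℝ) + 1 + ↑p + 1 + β - 1) = (i:ℝ) + 1 + ↑p + β by ring] at hB2
      push_cast at hB2
      have hc := genBinom_L3 ((i:ℝ) + 1 + ↑p + 1 + β) i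
      rw [show ((i:ℝ) + 1 + ↑p + 1 + β - 1) = (i:ℝ) + 1 + ↑p + β by ring] at hc
      have hd := genBinom_L2 ((i:ℝ) + 1 + ↑p + α) p
      linear_combination
        (-(x ^ (i + 1) * y ^ (p + 1)) * ((i:ℝ) + 1 + ↑p + 1 + α + β) *
            genBinom ((i:ℝ) + 1 + ↑p + 1 + β) (i + 1)) * hPa
        + (x ^ (i + 1) * y ^ (p + 1) * genBinom ((i:ℝ) + 1 + ↑p + α) p) * hB2
        + (x ^ (i + 1) * y ^ (p + 1) * genBinom ((i:ℝ) + 1 + ↑p + α) (p + 1)) * hc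
        + (x ^ (i + 1) * y ^ (p + 1) * genBinom ((i:ℝ) + 1 + ↑p + 1 + β) (i + 1)) * hd
    linarith [h0, hn, hint]
  rw [main, Finset.sum_sub_distrib, ← Finset.mul_sum, ← Finset.mul_sum]
  ring

/-- The three-term expansion of `((2k+β)/(k+β)) J_k^{-1,β}` in terms of `J^{0,β+1}`. -/
theorem genJacobi_m1_three_term (β : ℝ) (hβ : -1 < β) (k : ℕ) (hk : 2 ≤ k) (ζ : ℝ) :
    (2 * (k : ℝ) + β) / ((k : ℝ) + β) * genJacobi (-1) β k ζ
      = ((k : ℝ) + β + 1) / (2 * (k : ℝ) + β + 1) * genJacobi 0 (β + 1) k ζ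
        - (1 + β) * (2 * (k : ℝ) + β) / ((2 * (k : ℝ) + β - 1) * (2 * (k : ℝ) + β + 1)) *
            genJacobi 0 (β + 1) (k - 1) ζ
        - ((k : ℝ) - 1) / (2 * (k : ℝ) + β - 1) * genJacobi 0 (β + 1) (k - 2) ζ := by
  obtain ⟨K, rfl⟩ : ∃ K, k = K + 2 := ⟨k - 2, by omega⟩
  have i1 : K + 2 - 1 = K + 1 := by omega
  have i2 : K + 2 - 2 = K := by omega
  rw [i1, i2]
  have hK : (0:ℝ) ≤ (K:ℝ) := Nat.cast_nonneg K
  have hne1 : ((K:ℝ) + 2) + β ≠ 0 := by nlinarith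
  have hne2 : 2*((K:ℝ) + 2) + β + 1 ≠ 0 := by nlinarith
  have hne3 : 2*((K:ℝ) + 2) + β - 1 ≠ 0 := by nlinarith
  have h1 := lemA 0 β (K+1) ζ
  have h2 := lemB 0 β (K+1) ζ
  have h3 := lemB 0 β K ζ
  norm_num at h1 h2 h3
  push_cast at h1 h2 h3 ⊢
  simp only [show K + 1 + 1 = K + 2 from rfl] at h1 h2
  have e1 : (2 * ((K:ℝ) + 2) + β) / (↑K + 2 + β) * genJacobi (-1) β (K + 2) ζ
      = genJacobi 0 β (K + 2) ζ - genJacobi 0 β (K + 1) ζ := by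
    rw [div_mul_eq_mul_div, div_eq_iff hne1]
    linear_combination h1
  have e2 : genJacobi 0 β (K + 2) ζ
      = (((K:ℝ) + 2 + β + 1) * genJacobi 0 (β+1) (K+2) ζ + (↑K + 2) * genJacobi 0 (β+1) (K+1) ζ)
          / (2 * ((K:ℝ) + 2) + β + 1) := by
    rw [eq_div_iff hne2]
    linear_combination h2
  have e3 : genJacobi 0 β (K + 1) ζ
      = (((K:ℝ) + 2 + β) * genJacobi 0 (β+1) (K+1) ζ + (↑K + 1) * genJacobi 0 (β+1) K ζ)
          / (2 * ((K:ℝ) + 2) + β - 1) := by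
    rw [eq_div_iff hne3]
    linear_combination h3
  rw [e1, e2, e3]
  field_simp
  ring
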